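/- For every natural number n with n > e^7, the number of primes q with n^2 < q ≤ 2n^2 is greater than n / log n; that is, π(2n^2) − π(n^2) > n / log n, where π denotes the prime-counting function and log is the natural logarithm. -/

import Mathlib

open Nat Finset

/-- The number of primes in `(N, 2N]` equals `π(2N) - π(N)`. -/
lemma primes_Ioc_card (N : ℕ) :
    ((Finset.Ioc N (2 * N)).filter Nat.Prime).card
      = Nat.primeCounting (2 * N) - Nat.primeCounting N := by
  have h2 : Nat.primeCounting (2 * N) = ((2 * N + 1).primesBelow).card := by
    rw [Nat.primesBelow_card_eq_primeCounting']; rfl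
  have h1 : Nat.primeCounting N = ((N + 1).primesBelow).card := by
    rw [Nat.primesBelow_card_eq_primeCounting']; rfl
  have hsub : (N + 1).primesBelow ⊆ (2 * N + 1).primesBelow := by
    intro x hx
    rw [Nat.mem_primesBelow] at hx ⊢
    exact ⟨by omega, hx.2⟩
  have hsd : (2 * N + 1).primesBelow \ (N + 1).primesBelow
      = (Finset.Ioc N (2 * N)).filter Nat.Prime := by
    ext x
    simp only [Finset.mem_sdiff, Nat.mem_primesBelow, Finset.mem_filter, Finset.mem_Ioc]
    constructor
    · rintro ⟨⟨hlt, hp⟩, hnot⟩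
      refine ⟨⟨?_, by omega⟩, hp⟩
      by_contra h
      exact hnot ⟨by omega, hp⟩
    · rintro ⟨⟨hgt, hle⟩, hp⟩
      exact ⟨⟨by omega, hp⟩, fun h => by omega⟩
  rw [h1, h2, ← Finset.card_sdiff_of_subset hsub, hsd]

/-- Chebyshev-type upper bound on the central binomial coefficient in terms of the
number of primes in `(N, 2N]`. -/
lemma centralBinom_le_key (N : ℕ) (hN : 512 ≤ N) :
    Nat.centralBinom N ≤ (2 * N) ^ Nat.sqrt (2 * N) * 4 ^ (2 * N / 3)
      * (2 * N) ^ (Nat.primeCounting (2 * N) - Nat.primeCounting N) := by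
  have n_pos : 0 < N := by omega
  have n_large : 2 < N := by omega
  set f : ℕ → ℕ := fun x => x ^ (Nat.centralBinom N).factorization x with hf
  have hsplit : Nat.centralBinom N
      = (∏ p ∈ Finset.range (2 * N / 3 + 1), f p)
        * (∏ p ∈ Finset.Ioc (2 * N / 3) (2 * N), f p) := by
    have hle : 2 * N / 3 + 1 ≤ 2 * N + 1 := by omega
    rw [← N.prod_pow_factorization_centralBinom, Finset.range_eq_Ico,
      ← Finset.prod_Ico_consecutive _ (Nat.zero_le (2 * N / 3 + 1)) hle,
      Finset.Ico_add_one_add_one_eq_Ioc, ← Finset.range_eq_Ico]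
  rw [hsplit]
  have bound1 : (∏ p ∈ Finset.range (2 * N / 3 + 1), f p)
      ≤ (2 * N) ^ Nat.sqrt (2 * N) * 4 ^ (2 * N / 3) := by
    have n2_pos : 1 ≤ 2 * N := by omega
    let S := (Finset.range (2 * N / 3 + 1)).filter Nat.Prime
    have hS : ∏ x ∈ S, f x = ∏ x ∈ Finset.range (2 * N / 3 + 1), f x := by
      refine Finset.prod_filter_of_ne fun p _ h => ?_
      contrapose! h; dsimp only [f]
      rw [Nat.factorization_eq_zero_of_not_prime N.centralBinom h, pow_zero]
    rw [← hS, ← Finset.prod_filter_mul_prod_filter_not S (· ≤ Nat.sqrt (2 * N))]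
    apply Nat.mul_le_mul
    · refine (Finset.prod_le_prod' fun p _ => (?_ : f p ≤ 2 * N)).trans ?_
      · exact Nat.pow_factorization_choose_le (by omega)
      have hcard : (Finset.Icc 1 (Nat.sqrt (2 * N))).card = Nat.sqrt (2 * N) := by
        rw [Nat.card_Icc, Nat.add_sub_cancel]
      rw [Finset.prod_const]
      refine pow_right_mono₀ n2_pos ((Finset.card_le_card fun x hx => ?_).trans hcard.le)
      obtain ⟨h1, h2⟩ := Finset.mem_filter.1 hx
      exact Finset.mem_Icc.mpr ⟨(Finset.mem_filter.1 h1).2.one_lt.le, h2⟩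
    · refine le_trans ?_ (primorial_le_4_pow (2 * N / 3))
      refine (Finset.prod_le_prod' fun p hp => (?_ : f p ≤ p)).trans ?_
      · obtain ⟨h1, h2⟩ := Finset.mem_filter.1 hp
        refine (pow_right_mono₀ (Finset.mem_filter.1 h1).2.one_lt.le ?_).trans (pow_one p).le
        exact Nat.factorization_choose_le_one (Nat.sqrt_lt'.mp <| not_le.1 h2)
      refine Finset.prod_le_prod_of_subset_of_one_le' (Finset.filter_subset _ _) ?_
      exact fun p hp _ => (Finset.mem_filter.1 hp).2.one_lt.le
  have bound2 : (∏ p ∈ Finset.Ioc (2 * N / 3) (2 * N), f p)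
      ≤ (2 * N) ^ (Nat.primeCounting (2 * N) - Nat.primeCounting N) := by
    have hdivN : 2 * N / 3 ≤ N := by omega
    have hTsub : (Finset.Ioc N (2 * N)).filter Nat.Prime ⊆ Finset.Ioc (2 * N / 3) (2 * N) := by
      intro x hx
      obtain ⟨hx1, _⟩ := Finset.mem_filter.1 hx
      rw [Finset.mem_Ioc] at hx1 ⊢
      exact ⟨by omega, hx1.2⟩
    have heq : ∏ p ∈ (Finset.Ioc N (2 * N)).filter Nat.Prime, f p
        = ∏ p ∈ Finset.Ioc (2 * N / 3) (2 * N), f p := by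
      refine Finset.prod_subset hTsub fun x hx hnot => ?_
      rw [Finset.mem_Ioc] at hx
      by_cases hp : x.Prime
      · have hxN : x ≤ N := by
          by_contra h
          exact hnot (Finset.mem_filter.2 ⟨Finset.mem_Ioc.2 ⟨by omega, hx.2⟩, hp⟩)
        have h3x : 2 * N < 3 * x := by
          have := (Nat.div_lt_iff_lt_mul (by norm_num : 0 < 3)).1 hx.1
          omega
        dsimp only [f]
        rw [Nat.factorization_centralBinom_of_two_mul_self_lt_three_mul n_large hxN h3x,
          pow_zero]
      · dsimp only [f]
        rw [Nat.factorization_eq_zero_of_not_prime N.centralBinom hp, pow_zero]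
    rw [← heq, ← primes_Ioc_card]
    refine (Finset.prod_le_prod' fun p _ => (?_ : f p ≤ 2 * N)).trans ?_
    · exact Nat.pow_factorization_choose_le (by omega)
    rw [Finset.prod_const]
  exact Nat.mul_le_mul bound1 bound2

set_option maxHeartbeats 1000000 in
theorem primeCounting_gap_gt (n : ℕ) (hn : Real.exp 7 < (n : ℝ)) :
    (n : ℝ) / Real.log n <
      ((Nat.primeCounting (2 * n ^ 2) - Nat.primeCounting (n ^ 2) : ℕ) : ℝ) := by
  have hexp7 : (1096 : ℝ) < Real.exp 7 := by
    have h := Real.exp_one_gt_d9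
    have h7 : Real.exp 7 = (Real.exp 1) ^ (7 : ℕ) := by
      rw [← Real.exp_nat_mul]; norm_num
    have hp : (2.7182818283 : ℝ) ^ (7 : ℕ) < (Real.exp 1) ^ (7 : ℕ) :=
      pow_lt_pow_left₀ h (by norm_num) (by norm_num)
    rw [h7]
    refine lt_trans ?_ hp
    norm_num
  have hn1096 : (1096 : ℝ) < (n : ℝ) := lt_trans hexp7 hn
  have hnge : 1097 ≤ n := by exact_mod_cast hn1096
  have hx0 : (0 : ℝ) < (n : ℝ) := by positivity
  have hlogn : 7 < Real.log n := (Real.lt_log_iff_exp_lt hx0).2 hn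
  set N := n ^ 2 with hNdef
  have hN512 : 512 ≤ N := by
    have : 1097 ^ 2 ≤ n ^ 2 := Nat.pow_le_pow_left hnge 2
    omega
  set k := Nat.primeCounting (2 * N) - Nat.primeCounting N with hk
  -- the key natural number inequality
  have hnat : 4 ^ N < N * ((2 * N) ^ Nat.sqrt (2 * N) * 4 ^ (2 * N / 3) * (2 * N) ^ k) := by
    calc 4 ^ N < N * Nat.centralBinom N := Nat.four_pow_lt_mul_centralBinom N (by omega)
    _ ≤ N * ((2 * N) ^ Nat.sqrt (2 * N) * 4 ^ (2 * N / 3) * (2 * N) ^ k) :=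
        Nat.mul_le_mul_left N (centralBinom_le_key N hN512)
  -- pass to the reals and take logs
  set Lx := Real.log (n : ℝ) with hLx
  set L2 := Real.log 2 with hL2
  have hNcast : ((N : ℕ) : ℝ) = (n : ℝ) ^ 2 := by rw [hNdef]; push_cast; ring
  have hNRpos : (0 : ℝ) < (N : ℝ) := by rw [hNcast]; positivity
  have h2N : ((2 * N : ℕ) : ℝ) = 2 * (n : ℝ) ^ 2 := by rw [hNdef]; push_cast; ring
  have hlog2N : Real.log ((2 * N : ℕ) : ℝ) = L2 + 2 * Lx := by
    rw [h2N, Real.log_mul (by norm_num) (by positivity), Real.log_pow]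
    push_cast; ring
  have hlogN : Real.log ((N : ℕ) : ℝ) = 2 * Lx := by
    rw [hNcast, Real.log_pow]; push_cast; ring
  set M := L2 + 2 * Lx with hM
  have hL2pos : (0.6931471803 : ℝ) < L2 := Real.log_two_gt_d9
  have hL2lt : L2 < 0.6931471808 := Real.log_two_lt_d9
  have hMpos : 0 < M := by rw [hM]; nlinarith
  have hMlt : M < 3 * Lx := by rw [hM]; nlinarith
  -- bounds on sqrt and the floor division
  have hs : ((Nat.sqrt (2 * N) : ℕ) : ℝ) ≤ 1.5 * (n : ℝ) := by
    have h1 : ((Nat.sqrt (2 * N) : ℕ) : ℝ) ≤ Real.sqrt ((2 * N : ℕ) : ℝ) :=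
      Real.nat_sqrt_le_real_sqrt
    have h2 : Real.sqrt ((2 * N : ℕ) : ℝ) ≤ Real.sqrt ((1.5 * (n : ℝ)) ^ 2) := by
      apply Real.sqrt_le_sqrt
      rw [h2N]; nlinarith
    rw [Real.sqrt_sq (by positivity)] at h2
    exact h1.trans h2
  have hs0 : (0 : ℝ) ≤ ((Nat.sqrt (2 * N) : ℕ) : ℝ) := Nat.cast_nonneg _
  have ht : ((2 * N / 3 : ℕ) : ℝ) ≤ 2 * (n : ℝ) ^ 2 / 3 := by
    have := Nat.cast_div_le (α := ℝ) (m := 2 * N) (n := 3)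
    calc ((2 * N / 3 : ℕ) : ℝ) ≤ ((2 * N : ℕ) : ℝ) / ((3 : ℕ) : ℝ) := this
    _ = 2 * (n : ℝ) ^ 2 / 3 := by rw [h2N]; norm_num
  have ht0 : (0 : ℝ) ≤ ((2 * N / 3 : ℕ) : ℝ) := Nat.cast_nonneg _
  have hk0 : (0 : ℝ) ≤ (k : ℝ) := Nat.cast_nonneg _
  -- take logs of hnat
  have hlog4 : Real.log 4 = 2 * L2 := by
    rw [hL2, (by norm_num : (4 : ℝ) = 2 ^ 2), Real.log_pow]; push_cast; ring
  have hcast : ((4 ^ N : ℕ) : ℝ) < ((N * ((2 * N) ^ Nat.sqrt (2 * N) * 4 ^ (2 * N / 3)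
      * (2 * N) ^ k) : ℕ) : ℝ) := by exact_mod_cast hnat
  have hloglt := Real.log_lt_log (by positivity : (0 : ℝ) < ((4 ^ N : ℕ) : ℝ)) hcast
  have hexpand : (N : ℝ) * Real.log 4 < Real.log ((N : ℕ) : ℝ)
      + ((Nat.sqrt (2 * N) : ℕ) : ℝ) * Real.log ((2 * N : ℕ) : ℝ)
      + ((2 * N / 3 : ℕ) : ℝ) * Real.log 4
      + (k : ℝ) * Real.log ((2 * N : ℕ) : ℝ) := by
    have e1 : ((4 ^ N : ℕ) : ℝ) = (4 : ℝ) ^ N := by push_cast; ring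
    have e2 : ((N * ((2 * N) ^ Nat.sqrt (2 * N) * 4 ^ (2 * N / 3) * (2 * N) ^ k) : ℕ) : ℝ)
        = (N : ℝ) * (((2 * N : ℕ) : ℝ) ^ Nat.sqrt (2 * N) * (4 : ℝ) ^ (2 * N / 3)
          * ((2 * N : ℕ) : ℝ) ^ k) := by push_cast; ring
    rw [e1, e2] at hloglt
    have p2N : (0 : ℝ) < ((2 * N : ℕ) : ℝ) := by rw [h2N]; positivity
    rw [Real.log_pow] at hloglt
    rw [Real.log_mul (ne_of_gt hNRpos) (by positivity),
      Real.log_mul (by positivity) (by positivity),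
      Real.log_mul (by positivity) (by positivity),
      Real.log_pow, Real.log_pow, Real.log_pow] at hloglt
    push_cast at hloglt ⊢
    linarith
  rw [hlogN, hlog2N, hlog4, hNcast] at hexpand
  -- log x ≤ 2 * sqrt x - 2
  have hsqx : Real.sqrt (n : ℝ) * Real.sqrt (n : ℝ) = (n : ℝ) := Real.mul_self_sqrt (le_of_lt hx0)
  have hsqx33 : (33 : ℝ) ≤ Real.sqrt (n : ℝ) := by
    rw [show (33 : ℝ) = Real.sqrt (33 ^ 2) by rw [Real.sqrt_sq]; norm_num]
    apply Real.sqrt_le_sqrt; nlinarith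
  have hlogle : Lx ≤ 2 * Real.sqrt (n : ℝ) - 2 := by
    have h1 : Real.log (Real.sqrt (n : ℝ)) ≤ Real.sqrt (n : ℝ) - 1 :=
      Real.log_le_sub_one_of_pos (by positivity)
    have h2 : Lx = 2 * Real.log (Real.sqrt (n : ℝ)) := by
      rw [hLx, Real.log_sqrt (le_of_lt hx0)]; ring
    linarith
  -- final arithmetic
  clear_value N k Lx L2 M
  have hkM : (k : ℝ) * M > 2 * L2 / 3 * (n : ℝ) ^ 2 - 2 * Lx - 1.5 * (n : ℝ) * M := by
    have e1 : ((Nat.sqrt (2 * N) : ℕ) : ℝ) * M ≤ 1.5 * (n : ℝ) * M :=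
      mul_le_mul_of_nonneg_right hs hMpos.le
    have e2 : ((2 * N / 3 : ℕ) : ℝ) * (2 * L2) ≤ 2 * (n : ℝ) ^ 2 / 3 * (2 * L2) :=
      mul_le_mul_of_nonneg_right ht (by nlinarith)
    linarith
  have hkLx : (k : ℝ) * Lx > (n : ℝ) := by
    have hLxpos : 0 < Lx := by linarith
    have a1 : (k : ℝ) * M ≤ (k : ℝ) * (3 * Lx) := mul_le_mul_of_nonneg_left hMlt.le hk0
    have a2 : 1.5 * (n : ℝ) * M ≤ 1.5 * (n : ℝ) * (3 * Lx) :=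
      mul_le_mul_of_nonneg_left hMlt.le (by positivity)
    have bLx : Lx ≤ 2 * Real.sqrt (n : ℝ) := by linarith
    have bB : Real.sqrt (n : ℝ) * 33 ≤ (n : ℝ) := by nlinarith [hsqx, hsqx33]
    have bC : (n : ℝ) * Lx ≤ (n : ℝ) * (2 * Real.sqrt (n : ℝ)) :=
      mul_le_mul_of_nonneg_left bLx hx0.le
    have bD : (n : ℝ) * Real.sqrt (n : ℝ) * 33 ≤ (n : ℝ) ^ 2 := by
      have := mul_le_mul_of_nonneg_left bB hx0.le
      nlinarith
    have bG : (0.462 : ℝ) * (n : ℝ) ^ 2 ≤ 2 * L2 / 3 * (n : ℝ) ^ 2 :=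
      mul_le_mul_of_nonneg_right (by linarith) (sq_nonneg _)
    have bE : 1097 * (n : ℝ) ≤ (n : ℝ) ^ 2 := by
      have h1097 : (1097 : ℝ) ≤ (n : ℝ) := by exact_mod_cast hnge
      calc 1097 * (n : ℝ) ≤ (n : ℝ) * (n : ℝ) := mul_le_mul_of_nonneg_right h1097 hx0.le
      _ = (n : ℝ) ^ 2 := by ring
    linarith [hkM, a1, a2, bC, bD, bG, bE, bB, bLx]
  have hLxpos : 0 < Lx := by linarith
  rw [div_lt_iff₀ hLxpos]
  calc (n : ℝ) < (k : ℝ) * Lx := hkLx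
  _ = _ := by ring
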